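/- For all 0 ≤ t < T, the Itô-isometry variance integral of the residual diffusion bridge admits the closed form ∫_0^t 2·θ(s)·( sinh(θ̄_{t:T}) / sinh(θ̄_{s:T}) )^2 ds = 2· sinh(θ̄_{0:t})· sinh(θ̄_{t:T}) / sinh(θ̄_{0:T}). -/

import Mathlib

/-- For a continuous, positive schedule `θ` on `[0, T]`, the Itô-isometry variance
integral of the residual diffusion bridge admits the closed form
`∫_0^t 2·θ(s)·( sinh(θ̄_{t:T}) / sinh(θ̄_{s:T}) )² ds
  = 2·sinh(θ̄_{0:t})·sinh(θ̄_{t:T}) / sinh(θ̄_{0:T})`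
for all `0 ≤ t < T`, where `θ̄_{s:t} = ∫_s^t θ(z) dz`. -/
theorem variance_integral_closed_form (T : ℝ) (hT : 0 < T) (θ : ℝ → ℝ)
    (hθc : Continuous θ) (hθpos : ∀ z ∈ Set.Icc (0:ℝ) T, 0 < θ z) :
    ∀ t, 0 ≤ t → t < T →
      (∫ s in (0:ℝ)..t,
          2 * θ s * (Real.sinh (∫ z in t..T, θ z) / Real.sinh (∫ z in s..T, θ z)) ^ 2)
        = 2 * Real.sinh (∫ z in (0:ℝ)..t, θ z) * Real.sinh (∫ z in t..T, θ z)
            / Real.sinh (∫ z in (0:ℝ)..T, θ z) := by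
  intro t ht htT
  set F : ℝ → ℝ := fun s => ∫ z in s..T, θ z with hF
  -- F s = ∫_0^T - ∫_0^s
  have hFeq : ∀ s, F s = (∫ z in (0:ℝ)..T, θ z) - ∫ z in (0:ℝ)..s, θ z := by
    intro s
    rw [hF]
    simp only
    rw [eq_sub_iff_add_eq, add_comm,
      intervalIntegral.integral_add_adjacent_intervals
        (hθc.intervalIntegrable _ _) (hθc.intervalIntegrable _ _)]
  -- derivative of F
  have hFderiv : ∀ s, HasDerivAt F (-(θ s)) s := by
    intro s
    have h1 : HasDerivAt (fun u => ∫ z in (0:ℝ)..u, θ z) (θ s) s :=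
      intervalIntegral.integral_hasDerivAt_right (hθc.intervalIntegrable _ _)
        (hθc.stronglyMeasurable.stronglyMeasurableAtFilter) hθc.continuousAt
    have h2 := (h1.const_sub (∫ z in (0:ℝ)..T, θ z))
    refine HasDerivAt.congr_of_eventuallyEq h2 ?_
    filter_upwards with u using hFeq u
  -- positivity of F on [0, T)
  have hFpos : ∀ s, 0 ≤ s → s < T → 0 < F s := by
    intro s hs hsT
    apply intervalIntegral.intervalIntegral_pos_of_pos_on (hθc.intervalIntegrable _ _) _ hsT
    intro z hz
    exact hθpos z ⟨hs.trans hz.1.le, hz.2.le⟩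
  have hFcont : Continuous F := by
    have : Continuous fun s => (∫ z in (0:ℝ)..T, θ z) - ∫ z in (0:ℝ)..s, θ z :=
      continuous_const.sub (intervalIntegral.continuous_primitive
        (fun a b => hθc.intervalIntegrable a b) 0)
    exact this.congr fun s => (hFeq s).symm
  have hsinhne : ∀ s, 0 ≤ s → s < T → Real.sinh (F s) ≠ 0 := by
    intro s hs hsT
    exact Real.sinh_ne_zero.2 (hFpos s hs hsT).ne'
  set A := Real.sinh (F t) with hA
  -- antiderivative
  set g : ℝ → ℝ := fun s => 2 * A ^ 2 * (Real.cosh (F s) / Real.sinh (F s)) with hg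
  have hgderiv : ∀ s ∈ Set.uIcc (0:ℝ) t,
      HasDerivAt g (2 * θ s * (A / Real.sinh (F s)) ^ 2) s := by
    intro s hs
    rw [Set.uIcc_of_le ht] at hs
    have hsT : s < T := lt_of_le_of_lt hs.2 htT
    have hne : Real.sinh (F s) ≠ 0 := hsinhne s hs.1 hsT
    have hd := (hFderiv s)
    have hcosh : HasDerivAt (fun u => Real.cosh (F u)) (Real.sinh (F s) * (-(θ s))) s :=
      (Real.hasDerivAt_cosh (F s)).comp s hd
    have hsinh : HasDerivAt (fun u => Real.sinh (F u)) (Real.cosh (F s) * (-(θ s))) s :=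
      (Real.hasDerivAt_sinh (F s)).comp s hd
    have hdiv := hcosh.div hsinh hne
    have := (hdiv.const_mul (2 * A ^ 2))
    refine this.congr_deriv (Eq.symm ?_)
    have h1 : Real.cosh (F s) ^ 2 - Real.sinh (F s) ^ 2 = 1 := Real.cosh_sq_sub_sinh_sq (F s)
    field_simp
    linear_combination (-1) * A ^ 2 * θ s * h1
  -- integrability of the integrand
  have hint : IntervalIntegrable
      (fun s => 2 * θ s * (A / Real.sinh (F s)) ^ 2) MeasureTheory.volume 0 t := by
    apply ContinuousOn.intervalIntegrable
    have hne' : ∀ s ∈ Set.uIcc (0:ℝ) t, Real.sinh (F s) ≠ 0 := by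
      intro s hs
      rw [Set.uIcc_of_le ht] at hs
      exact hsinhne s hs.1 (lt_of_le_of_lt hs.2 htT)
    have hdivc : ContinuousOn (fun s => A / Real.sinh (F s)) (Set.uIcc 0 t) :=
      continuousOn_const.div (Real.continuous_sinh.comp hFcont).continuousOn hne'
    exact (continuous_const.mul hθc).continuousOn.mul (hdivc.pow 2)
  have hFTC := intervalIntegral.integral_eq_sub_of_hasDerivAt hgderiv hint
  calc (∫ s in (0:ℝ)..t,
          2 * θ s * (Real.sinh (∫ z in t..T, θ z) / Real.sinh (∫ z in s..T, θ z)) ^ 2)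
      = ∫ s in (0:ℝ)..t, 2 * θ s * (A / Real.sinh (F s)) ^ 2 := by rfl
    _ = g t - g 0 := hFTC
    _ = 2 * Real.sinh (∫ z in (0:ℝ)..t, θ z) * Real.sinh (∫ z in t..T, θ z)
            / Real.sinh (∫ z in (0:ℝ)..T, θ z) := by
        have hF0 : F 0 = ∫ z in (0:ℝ)..T, θ z := by rw [hFeq 0]; simp
        have h0t : (∫ z in (0:ℝ)..t, θ z) = F 0 - F t := by rw [hFeq t, hF0]; ring
        have hne0 : Real.sinh (F 0) ≠ 0 := hsinhne 0 le_rfl hT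
        have hnet : Real.sinh (F t) ≠ 0 := hsinhne t ht htT
        rw [hg, h0t, ← hF0, Real.sinh_sub, hA]
        field_simp
        ring
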